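/- Define the 2×2 complex matrices P¹ = [[1,0],[0,0]], P² = (1/2)[[1,−1],[−1,1]], P³ = (1/2)[[1,−i],[i,1]], and P⁴ = (1/5)[[4,(6+8i)/5],[(6−8i)/5,1]], and the four bases B_j = {P^j, I − P^j} for j = 1,…,4, with probability assignments p(P¹) = 1/2, p(P²) = 5/12, p(P³) = 3/8, p(P⁴) = 9/16 (and complementary probabilities on I − P^j). Then: (a) for every choice of three of the four bases there exists a density matrix ρ (a 2×2 positive semidefinite complex matrix with trace 1) with tr(ρ P^j) equal to the assigned probability for each of those three bases; but (b) there is no density matrix ρ satisfying tr(ρ P^j) equal to the assigned probability simultaneously for all four bases. -/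

import Mathlib

open Matrix ComplexOrder

/-- A 2×2 matrix `!![a, u+vi; u−vi, b]` with `a, b ≥ 0` and `u² + v² ≤ ab` is
positive semidefinite. -/
lemma psd2_aux (a b u v : ℝ) (ha : 0 ≤ a) (hb : 0 ≤ b) (h : u^2 + v^2 ≤ a * b) :
    (!![(a:ℂ), (u:ℂ) + v * Complex.I; (u:ℂ) - v * Complex.I, (b:ℂ)]).PosSemidef := by
  rw [Matrix.posSemidef_iff_dotProduct_mulVec]
  constructor
  · ext i j
    fin_cases i <;> fin_cases j <;>
      simp [Matrix.conjTranspose_apply, Complex.ext_iff]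
  · intro x
    have hx : star x ⬝ᵥ (!![(a:ℂ), (u:ℂ) + v * Complex.I; (u:ℂ) - v * Complex.I, (b:ℂ)]).mulVec x
        = (starRingEnd ℂ) (x 0) * (a * x 0 + ((u:ℂ) + v * Complex.I) * x 1)
          + (starRingEnd ℂ) (x 1) * (((u:ℂ) - v * Complex.I) * x 0 + b * x 1) := by
      simp [Matrix.mulVec, dotProduct, Fin.sum_univ_two]
      try ring
    rw [hx, Complex.le_def]
    constructor
    · simp only [Complex.zero_re, Complex.add_re, Complex.mul_re, Complex.mul_im,
        Complex.add_im, Complex.conj_re, Complex.conj_im, Complex.ofReal_re,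
        Complex.ofReal_im, Complex.I_re, Complex.I_im, Complex.sub_re, Complex.sub_im]
      set p := (x 0).re; set q := (x 0).im; set r := (x 1).re; set s := (x 1).im
      rcases eq_or_lt_of_le ha with h0 | h0
      · subst h0
        have hu : u = 0 := by nlinarith [sq_nonneg u, sq_nonneg v]
        have hv : v = 0 := by nlinarith [sq_nonneg u, sq_nonneg v]
        subst hu hv
        nlinarith [mul_nonneg hb (sq_nonneg r), mul_nonneg hb (sq_nonneg s)]
      · nlinarith [sq_nonneg (a * p + u * r - v * s), sq_nonneg (a * q + v * r + u * s),
          mul_nonneg (sub_nonneg.mpr h) (add_nonneg (sq_nonneg r) (sq_nonneg s))]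
    · simp only [Complex.zero_im, Complex.add_im, Complex.mul_re, Complex.mul_im,
        Complex.add_re, Complex.conj_re, Complex.conj_im, Complex.ofReal_re,
        Complex.ofReal_im, Complex.I_re, Complex.I_im, Complex.sub_re, Complex.sub_im]
      ring

/-- The explicit candidate density matrices used below. -/
noncomputable def rhoAux (a b u v : ℝ) : Matrix (Fin 2) (Fin 2) ℂ :=
  !![(a:ℂ), (u:ℂ) + v * Complex.I; (u:ℂ) - v * Complex.I, (b:ℂ)]

lemma rhoAux_psd (a b u v : ℝ) (ha : 0 ≤ a) (hb : 0 ≤ b) (h : u^2 + v^2 ≤ a * b) :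
    (rhoAux a b u v).PosSemidef := psd2_aux a b u v ha hb h

/-- The four rank-one projections `P¹, P², P³, P⁴` on `ℂ²`. -/
noncomputable def Pex : Fin 4 → Matrix (Fin 2) (Fin 2) ℂ :=
  ![!![1, 0; 0, 0],
    (1 / 2 : ℂ) • !![1, -1; -1, 1],
    (1 / 2 : ℂ) • !![1, -Complex.I; Complex.I, 1],
    (1 / 5 : ℂ) • !![4, (6 + 8 * Complex.I) / 5; (6 - 8 * Complex.I) / 5, 1]]

lemma trAux0 (a b u v : ℝ) : (rhoAux a b u v * Pex 0).trace = ((a : ℝ) : ℂ) := by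
  simp [rhoAux, Pex, Matrix.trace, Matrix.mul_apply, Fin.sum_univ_two]

lemma trAux1 (a b u v : ℝ) : (rhoAux a b u v * Pex 1).trace = (((a+b)/2 - u : ℝ) : ℂ) := by
  simp [rhoAux, Pex, Matrix.trace, Matrix.mul_apply, Fin.sum_univ_two]
  ring

lemma trAux2 (a b u v : ℝ) : (rhoAux a b u v * Pex 2).trace = (((a+b)/2 - v : ℝ) : ℂ) := by
  simp [rhoAux, Pex, Matrix.trace, Matrix.mul_apply, Fin.sum_univ_two]
  ring_nf
  rw [Complex.I_sq]
  ring

lemma trAux3 (a b u v : ℝ) :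
    (rhoAux a b u v * Pex 3).trace = (((4*a+b)/5 + (12*u+16*v)/25 : ℝ) : ℂ) := by
  simp [rhoAux, Pex, Matrix.trace, Matrix.mul_apply, Fin.sum_univ_two]
  ring_nf
  rw [Complex.I_sq]
  ring

lemma trAuxTr (a b u v : ℝ) : (rhoAux a b u v).trace = ((a + b : ℝ) : ℂ) := by
  simp [rhoAux, Matrix.trace, Fin.sum_univ_two]

/-- The assigned probabilities `p(P¹) = 1/2`, `p(P²) = 5/12`, `p(P³) = 3/8`,
`p(P⁴) = 9/16`. -/
noncomputable def pex : Fin 4 → ℝ := ![1 / 2, 5 / 12, 3 / 8, 9 / 16]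

/-- Any three of the four probability assignments on the bases `{Pʲ, I − Pʲ}` of `ℂ²`
are realized by a density matrix, but no density matrix realizes all four
simultaneously. -/
theorem dim_two_three_consistent_four_not :
    (∀ S : Finset (Fin 4), S.card = 3 →
      ∃ ρ : Matrix (Fin 2) (Fin 2) ℂ, ρ.PosSemidef ∧ ρ.trace = 1 ∧
        ∀ j ∈ S, (ρ * Pex j).trace = (pex j : ℂ)) ∧
    ¬ ∃ ρ : Matrix (Fin 2) (Fin 2) ℂ, ρ.PosSemidef ∧ ρ.trace = 1 ∧
        ∀ j, (ρ * Pex j).trace = (pex j : ℂ) := by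
  constructor
  · have hcases : ∀ T : Finset (Fin 4), T.card = 3 →
        T = {1, 2, 3} ∨ T = {0, 2, 3} ∨ T = {0, 1, 3} ∨ T = {0, 1, 2} := by decide
    intro S hS
    rcases hcases S hS with h | h | h | h <;> subst h
    · refine ⟨rhoAux (97/240) (143/240) (1/12) (1/8),
        rhoAux_psd _ _ _ _ (by norm_num) (by norm_num) (by norm_num), ?_, ?_⟩
      · rw [trAuxTr]; norm_num
      · intro j hj
        simp only [Finset.mem_insert, Finset.mem_singleton] at hj
        rcases hj with rfl | rfl | rfl
        · rw [trAux1]; norm_num [pex]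
        · rw [trAux2]; norm_num [pex]; rw [show ((3:ℂ)/8) = ((3/8:ℝ):ℂ) by push_cast; ring]; rfl
        · rw [trAux3]; norm_num [pex]; rw [show ((9:ℂ)/16) = ((9/16:ℝ):ℂ) by push_cast; ring]; rfl
    · refine ⟨rhoAux (1/2) (1/2) (-7/192) (1/8),
        rhoAux_psd _ _ _ _ (by norm_num) (by norm_num) (by norm_num), ?_, ?_⟩
      · rw [trAuxTr]; norm_num
      · intro j hj
        simp only [Finset.mem_insert, Finset.mem_singleton] at hj
        rcases hj with rfl | rfl | rfl
        · rw [trAux0]; norm_num [pex]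
        · rw [trAux2]; norm_num [pex]; rw [show ((3:ℂ)/8) = ((3/8:ℝ):ℂ) by push_cast; ring]; rfl
        · rw [trAux3]; norm_num [pex]; rw [show ((9:ℂ)/16) = ((9/16:ℝ):ℂ) by push_cast; ring]; rfl
    · refine ⟨rhoAux (1/2) (1/2) (1/12) (9/256),
        rhoAux_psd _ _ _ _ (by norm_num) (by norm_num) (by norm_num), ?_, ?_⟩
      · rw [trAuxTr]; norm_num
      · intro j hj
        simp only [Finset.mem_insert, Finset.mem_singleton] at hj
        rcases hj with rfl | rfl | rfl
        · rw [trAux0]; norm_num [pex]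
        · rw [trAux1]; norm_num [pex]
        · rw [trAux3]; norm_num [pex]; rw [show ((9:ℂ)/16) = ((9/16:ℝ):ℂ) by push_cast; ring]; rfl
    · refine ⟨rhoAux (1/2) (1/2) (1/12) (1/8),
        rhoAux_psd _ _ _ _ (by norm_num) (by norm_num) (by norm_num), ?_, ?_⟩
      · rw [trAuxTr]; norm_num
      · intro j hj
        simp only [Finset.mem_insert, Finset.mem_singleton] at hj
        rcases hj with rfl | rfl | rfl
        · rw [trAux0]; norm_num [pex]
        · rw [trAux1]; norm_num [pex]
        · rw [trAux2]; norm_num [pex]; rw [show ((3:ℂ)/8) = ((3/8:ℝ):ℂ) by push_cast; ring]; rfl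
  · rintro ⟨ρ, _, htr, h⟩
    have e0 := h 0
    have e1 := h 1
    have e2 := h 2
    have e3 := h 3
    simp [Pex, pex, Matrix.trace, Matrix.mul_apply, Fin.sum_univ_two] at e0 e1 e2 e3
    simp [Matrix.trace, Fin.sum_univ_two] at htr
    rw [Complex.ext_iff] at e0 e1 e2 e3 htr
    norm_num [Complex.add_re, Complex.add_im, Complex.mul_re, Complex.mul_im,
      Complex.div_re, Complex.div_im] at e0 e1 e2 e3 htr
    obtain ⟨e0r, e0i⟩ := e0
    obtain ⟨e1r, e1i⟩ := e1
    obtain ⟨e2r, e2i⟩ := e2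
    obtain ⟨e3r, e3i⟩ := e3
    obtain ⟨htr1, htr2⟩ := htr
    linarith
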